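/- arXiv:math/0112297 — 3 statements merged into one kernel-verified Lean document; each statement's English description precedes it below -/
import Mathlib

section
/- Let n, m ≥ 1, set r = min(n,m), let δ ∈ (0,1), and let λ₁,…,λ_r be nonnegative real numbers with ∑_{i=1}^r λᵢ² ≤ 1 − δ. Then for every family of real numbers (h_{α i k}) with α ∈ {1,…,m} and i, k ∈ {1,…,n}, one has ∑_{α,i,k} h_{α i k}² − 2 ∑_{k=1}^n ∑_{1 ≤ i < j ≤ r} λᵢ λⱼ ( h_{i i k} h_{j j k} − h_{j i k} h_{i j k} ) ≥ δ ∑_{α,i,k} h_{α i k}². (Non-negativity, with gap δ|A|², of the quadratic second-fundamental-form terms in the evolution equation of *Ω₁.) -/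
open Finset

private lemma swapIoi' {r : ℕ} (G : Fin r → Fin r → ℝ) :
    ∑ i, ∑ j ∈ Ioi i, G i j = ∑ j, ∑ i ∈ Iio j, G i j := by
  have h1 : ∀ i : Fin r, ∑ j ∈ Ioi i, G i j = ∑ j, if i < j then G i j else 0 := by
    intro i; rw [← filter_lt_eq_Ioi, sum_filter]
  have h2 : ∀ j : Fin r, ∑ i ∈ Iio j, G i j = ∑ i, if i < j then G i j else 0 := by
    intro j; rw [← filter_gt_eq_Iio, sum_filter]
  simp_rw [h1, h2]
  exact Finset.sum_comm

private lemma splitUniv' {r : ℕ} (F : Fin r → Fin r → ℝ) (p : Fin r) :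
    ∑ q, F p q = (∑ q ∈ Iio p, F p q) + F p p + ∑ q ∈ Ioi p, F p q := by
  rw [← Finset.sum_filter_add_sum_filter_not univ (· < p), filter_gt_eq_Iio]
  have h1 : ({q | ¬ q < p} : Finset (Fin r)) = insert p (Ioi p) := by
    ext x; simp [not_lt, le_iff_lt_or_eq, eq_comm, or_comm]
  rw [h1, sum_insert (by simp)]
  ring

private lemma perk {r n m : ℕ} (L : ℝ) (hL : 0 ≤ L) (lam : Fin r → ℝ)
    (hsum : ∑ i, lam i ^ 2 ≤ L) (g : Fin m → Fin n → ℝ)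
    (e1 : Fin r → Fin m) (e2 : Fin r → Fin n)
    (h1 : Function.Injective e1) (h2 : Function.Injective e2) :
    2 * ∑ i, ∑ j ∈ Ioi i, lam i * lam j *
        (g (e1 i) (e2 i) * g (e1 j) (e2 j) - g (e1 j) (e2 i) * g (e1 i) (e2 j)) ≤
      L * ∑ a, ∑ b, g a b ^ 2 := by
  classical
  set F : Fin r → Fin r → ℝ := fun p q => g (e1 p) (e2 q) ^ 2 with hF
  have hFnn : ∀ p q, 0 ≤ F p q := fun p q => sq_nonneg _
  have hle : ∀ q, lam q ^ 2 ≤ L := fun q =>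
    le_trans (Finset.single_le_sum (f := fun i => lam i ^ 2)
      (fun i _ => sq_nonneg _) (mem_univ q)) hsum
  have step1 : 2 * ∑ i, ∑ j ∈ Ioi i, lam i * lam j *
        (g (e1 i) (e2 i) * g (e1 j) (e2 j) - g (e1 j) (e2 i) * g (e1 i) (e2 j)) ≤
      ∑ i, ∑ j ∈ Ioi i,
        (lam j ^ 2 * F i i + lam i ^ 2 * F j j + lam i ^ 2 * F j i + lam j ^ 2 * F i j) := by
    rw [Finset.mul_sum]
    refine Finset.sum_le_sum fun i _ => ?_
    rw [Finset.mul_sum]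
    refine Finset.sum_le_sum fun j _ => ?_
    simp only [hF]
    nlinarith [sq_nonneg (lam j * g (e1 i) (e2 i) - lam i * g (e1 j) (e2 j)),
      sq_nonneg (lam i * g (e1 j) (e2 i) + lam j * g (e1 i) (e2 j))]
  have split4 : ∑ i, ∑ j ∈ Ioi i,
        (lam j ^ 2 * F i i + lam i ^ 2 * F j j + lam i ^ 2 * F j i + lam j ^ 2 * F i j)
      = (∑ i, ∑ j ∈ Ioi i, lam j ^ 2 * F i i) + (∑ i, ∑ j ∈ Ioi i, lam i ^ 2 * F j j)
        + (∑ i, ∑ j ∈ Ioi i, lam i ^ 2 * F j i) + (∑ i, ∑ j ∈ Ioi i, lam j ^ 2 * F i j) := by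
    simp [Finset.sum_add_distrib]
  have t2 : (∑ i, ∑ j ∈ Ioi i, lam i ^ 2 * F j j)
      = ∑ p, ∑ q ∈ Iio p, lam q ^ 2 * F p p := swapIoi' _
  have t3 : (∑ i, ∑ j ∈ Ioi i, lam i ^ 2 * F j i)
      = ∑ p, ∑ q ∈ Iio p, lam q ^ 2 * F p q := swapIoi' _
  have diag : (∑ i, ∑ j ∈ Ioi i, lam j ^ 2 * F i i) + (∑ p, ∑ q ∈ Iio p, lam q ^ 2 * F p p)
      ≤ ∑ p, L * F p p := by
    rw [← Finset.sum_add_distrib]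
    refine Finset.sum_le_sum fun p _ => ?_
    have e : (∑ j ∈ Ioi p, lam j ^ 2 * F p p) + (∑ q ∈ Iio p, lam q ^ 2 * F p p)
        = ((∑ j ∈ Ioi p, lam j ^ 2) + ∑ q ∈ Iio p, lam q ^ 2) * F p p := by
      rw [add_mul, Finset.sum_mul, Finset.sum_mul]
    rw [e]
    have hsplit := splitUniv' (fun _ q => lam q ^ 2) p
    have hb : (∑ j ∈ Ioi p, lam j ^ 2) + ∑ q ∈ Iio p, lam q ^ 2 ≤ L := by
      nlinarith [sq_nonneg (lam p)]
    exact mul_le_mul_of_nonneg_right hb (hFnn p p)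
  have off1 : (∑ p, ∑ q ∈ Iio p, lam q ^ 2 * F p q) ≤ ∑ p, ∑ q ∈ Iio p, L * F p q :=
    Finset.sum_le_sum fun p _ => Finset.sum_le_sum fun q _ =>
      mul_le_mul_of_nonneg_right (hle q) (hFnn p q)
  have off2 : (∑ i, ∑ j ∈ Ioi i, lam j ^ 2 * F i j) ≤ ∑ p, ∑ q ∈ Ioi p, L * F p q :=
    Finset.sum_le_sum fun p _ => Finset.sum_le_sum fun q _ =>
      mul_le_mul_of_nonneg_right (hle q) (hFnn p q)
  have total : (∑ p, L * F p p) + (∑ p, ∑ q ∈ Iio p, L * F p q)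
        + (∑ p, ∑ q ∈ Ioi p, L * F p q) = L * ∑ p, ∑ q, F p q := by
    rw [Finset.mul_sum, ← Finset.sum_add_distrib, ← Finset.sum_add_distrib]
    refine Finset.sum_congr rfl fun p _ => ?_
    rw [splitUniv' F p, mul_add, mul_add, Finset.mul_sum, Finset.mul_sum]
    ring
  have injstep : (∑ p, ∑ q, F p q) ≤ ∑ a, ∑ b, g a b ^ 2 := by
    have inner : ∀ p, (∑ q, F p q) ≤ ∑ b, g (e1 p) b ^ 2 := by
      intro p
      have e : ∑ q : Fin r, F p q = ∑ b ∈ Finset.image e2 univ, g (e1 p) b ^ 2 := by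
        simp only [hF]
        exact (Finset.sum_image (f := fun b => g (e1 p) b ^ 2) (g := e2)
          (fun x _ y _ hxy => h2 hxy)).symm
      rw [e]
      exact Finset.sum_le_sum_of_subset_of_nonneg (Finset.subset_univ _)
        (fun b _ _ => sq_nonneg _)
    calc (∑ p, ∑ q, F p q) ≤ ∑ p, ∑ b, g (e1 p) b ^ 2 :=
          Finset.sum_le_sum fun p _ => inner p
      _ = ∑ a ∈ Finset.image e1 univ, ∑ b, g a b ^ 2 :=
          (Finset.sum_image (f := fun a => ∑ b, g a b ^ 2) (g := e1)
            (fun x _ y _ hxy => h1 hxy)).symm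
      _ ≤ ∑ a, ∑ b, g a b ^ 2 :=
          Finset.sum_le_sum_of_subset_of_nonneg (Finset.subset_univ _)
            (fun a _ _ => Finset.sum_nonneg fun b _ => sq_nonneg _)
  have final : L * (∑ p, ∑ q, F p q) ≤ L * ∑ a, ∑ b, g a b ^ 2 :=
    mul_le_mul_of_nonneg_left injstep hL
  linarith [step1, split4 ▸ step1]

/-- Non-negativity, with gap `δ|A|²`, of the quadratic second-fundamental-form terms in
the evolution equation of `*Ω₁`: if `r = min(n,m)`, `δ ∈ (0,1)` and `λ₁,…,λ_r ≥ 0` with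
`∑ λᵢ² ≤ 1 − δ`, then for every real array `(h_{α i k})`,
`∑ h² − 2 ∑_k ∑_{i<j} λᵢλⱼ (h_{iik} h_{jjk} − h_{jik} h_{ijk}) ≥ δ ∑ h²`. -/
theorem second_fundamental_form_quadratic_term_nonneg
    (n m : ℕ) (hn : 1 ≤ n) (hm : 1 ≤ m) (δ : ℝ) (hδ : δ ∈ Set.Ioo (0 : ℝ) 1)
    (lam : Fin (min n m) → ℝ) (hnonneg : ∀ i, 0 ≤ lam i)
    (hsum : ∑ i, lam i ^ 2 ≤ 1 - δ)
    (h : Fin m → Fin n → Fin n → ℝ) :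
    δ * (∑ α, ∑ i, ∑ k, h α i k ^ 2) ≤
      (∑ α, ∑ i, ∑ k, h α i k ^ 2) -
        2 * ∑ k : Fin n, ∑ i : Fin (min n m), ∑ j ∈ Finset.Ioi i,
          lam i * lam j *
            (h (Fin.castLE (min_le_right n m) i) (Fin.castLE (min_le_left n m) i) k *
                h (Fin.castLE (min_le_right n m) j) (Fin.castLE (min_le_left n m) j) k -
              h (Fin.castLE (min_le_right n m) j) (Fin.castLE (min_le_left n m) i) k *
                h (Fin.castLE (min_le_right n m) i) (Fin.castLE (min_le_left n m) j) k) := by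
  obtain ⟨hδ0, hδ1⟩ := hδ
  have hL : (0:ℝ) ≤ 1 - δ := by linarith
  have hswap : ∑ α, ∑ i, ∑ k, h α i k ^ 2 = ∑ k, ∑ α, ∑ i, h α i k ^ 2 := by
    have e1 : ∑ α, ∑ i, ∑ k, h α i k ^ 2 = ∑ α, ∑ k, ∑ i, h α i k ^ 2 :=
      Finset.sum_congr rfl fun α _ => Finset.sum_comm
    rw [e1]; exact Finset.sum_comm
  have key : ∀ k : Fin n, 2 * (∑ i : Fin (min n m), ∑ j ∈ Finset.Ioi i,
        lam i * lam j *
          (h (Fin.castLE (min_le_right n m) i) (Fin.castLE (min_le_left n m) i) k *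
              h (Fin.castLE (min_le_right n m) j) (Fin.castLE (min_le_left n m) j) k -
            h (Fin.castLE (min_le_right n m) j) (Fin.castLE (min_le_left n m) i) k *
              h (Fin.castLE (min_le_right n m) i) (Fin.castLE (min_le_left n m) j) k)) ≤
      (1 - δ) * ∑ α, ∑ i, h α i k ^ 2 := fun k =>
    perk (1 - δ) hL lam hsum (fun a b => h a b k)
      (Fin.castLE (min_le_right n m)) (Fin.castLE (min_le_left n m))
      (Fin.castLE_injective _) (Fin.castLE_injective _)
  have main : 2 * ∑ k : Fin n, ∑ i : Fin (min n m), ∑ j ∈ Finset.Ioi i,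
        lam i * lam j *
          (h (Fin.castLE (min_le_right n m) i) (Fin.castLE (min_le_left n m) i) k *
              h (Fin.castLE (min_le_right n m) j) (Fin.castLE (min_le_left n m) j) k -
            h (Fin.castLE (min_le_right n m) j) (Fin.castLE (min_le_left n m) i) k *
              h (Fin.castLE (min_le_right n m) i) (Fin.castLE (min_le_left n m) j) k) ≤
      (1 - δ) * ∑ k, ∑ α, ∑ i, h α i k ^ 2 := by
    rw [Finset.mul_sum, Finset.mul_sum]
    exact Finset.sum_le_sum fun k _ => key k
  linarith [main, hswap ▸ main]
end

section
/- Let n ≥ 2, let k₁, k₂ be real numbers with k₁ ≥ |k₂| and k₁ + k₂ > 0, let δ ∈ (0,1), and let λ₁,…,λ_n be real numbers with λⱼ² ≤ 1 − δ for all j. Then for every index i ∈ {1,…,n}: k₁ ∑_{j ≠ i} 1/(1+λⱼ²) + k₂ ( 1 − n + ∑_{j ≠ i} 1/(1+λⱼ²) ) ≥ (n−1)( k₁ − (1−δ) k₂ )/(2−δ), and this lower bound is strictly positive. -/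
/-- Curvature term estimate with positive gap: if `n ≥ 2`, `k₁ ≥ |k₂|`, `k₁ + k₂ > 0`,
`δ ∈ (0,1)` and `λⱼ² ≤ 1 − δ` for all `j`, then for each `i`,
`k₁ ∑_{j≠i} 1/(1+λⱼ²) + k₂ (1 − n + ∑_{j≠i} 1/(1+λⱼ²)) ≥ (n−1)(k₁ − (1−δ)k₂)/(2−δ) > 0`. -/
theorem curvature_term_positive
    (n : ℕ) (hn : 2 ≤ n) (k₁ k₂ : ℝ) (hk : |k₂| ≤ k₁) (hsum : 0 < k₁ + k₂)
    (δ : ℝ) (hδ : δ ∈ Set.Ioo (0 : ℝ) 1)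
    (lam : Fin n → ℝ) (hlam : ∀ j, lam j ^ 2 ≤ 1 - δ) (i : Fin n) :
    (((n : ℝ) - 1) * (k₁ - (1 - δ) * k₂) / (2 - δ) ≤
        k₁ * (∑ j ∈ Finset.univ.erase i, 1 / (1 + lam j ^ 2)) +
          k₂ * (1 - (n : ℝ) + ∑ j ∈ Finset.univ.erase i, 1 / (1 + lam j ^ 2))) ∧
      0 < ((n : ℝ) - 1) * (k₁ - (1 - δ) * k₂) / (2 - δ) := by
  obtain ⟨hδ0, hδ1⟩ := hδ
  obtain ⟨hk1, hk2⟩ := abs_le.mp hk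
  have h2δ : (0:ℝ) < 2 - δ := by linarith
  have hn2 : (2:ℝ) ≤ (n:ℝ) := by exact_mod_cast hn
  set S := ∑ j ∈ Finset.univ.erase i, 1 / (1 + lam j ^ 2) with hSdef
  have hterm : ∀ j : Fin n, 1 ≤ (2 - δ) * (1 / (1 + lam j ^ 2)) := by
    intro j
    have hpos : (0:ℝ) < 1 + lam j ^ 2 := by positivity
    rw [mul_one_div, le_div_iff₀ hpos]
    nlinarith [hlam j]
  have hcard : ((Finset.univ.erase i).card : ℝ) = (n:ℝ) - 1 := by
    rw [Finset.card_erase_of_mem (Finset.mem_univ i), Finset.card_univ, Fintype.card_fin]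
    have : (1:ℕ) ≤ n := by omega
    push_cast [Nat.cast_sub this]
    ring
  have hS' : (n:ℝ) - 1 ≤ (2 - δ) * S := by
    rw [hSdef, Finset.mul_sum, ← hcard]
    calc ((Finset.univ.erase i).card : ℝ)
        = ∑ _j ∈ Finset.univ.erase i, (1:ℝ) := by simp
      _ ≤ ∑ j ∈ Finset.univ.erase i, (2 - δ) * (1 / (1 + lam j ^ 2)) :=
          Finset.sum_le_sum fun j _ => hterm j
  have hk1pos : (0:ℝ) < k₁ := by
    have := abs_nonneg k₂
    linarith
  have hgap : 0 < k₁ - (1 - δ) * k₂ := by nlinarith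
  constructor
  · rw [div_le_iff₀ h2δ]
    nlinarith [mul_le_mul_of_nonneg_left hS' hsum.le]
  · exact div_pos (mul_pos (by linarith) hgap) h2δ
end

section
/- Let V₁ and V₂ be finite-dimensional real inner product spaces with dim V₁ = n ≥ 2 and dim V₂ = m, let D : V₁ → V₂ be linear with adjoint D*, let (aᵢ), (b_α) be singular-value bases for D with singular values λᵢ, and set λ_{iα} := ⟨D aᵢ, b_α⟩. Let eᵢ := (1+λᵢ²)^{-1/2}(aᵢ, D aᵢ) and v_α := (1+‖D* b_α‖²)^{-1/2}(−D* b_α, b_α), and let Ω₁ be the alternating n-form on V₁ × V₂ obtained by composing the determinant form of the basis (aᵢ) of V₁ with the first projection in each argument. Then for all α, β ∈ {1,…,m}: Ω₁(v_α, v_β, e₃, …, e_n) = ( λ_{1α} λ_{2β} − λ_{2α} λ_{1β} ) · ∏_{k=1}^n (1+λ_k²)^{-1/2}. -/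
private lemma alt_map_zero_of_smul {R M N ι : Type*} [CommSemiring R] [AddCommMonoid M]
    [AddCommMonoid N] [Module R M] [Module R N] [DecidableEq ι]
    (f : M [⋀^ι]→ₗ[R] N) (v : ι → M) {i j : ι} (hij : i ≠ j) (r : R)
    (h : v i = r • v j) : f v = 0 := by
  have h1 : v = Function.update v i (r • v j) := by rw [← h, Function.update_eq_self]
  rw [h1, f.map_update_smul, f.map_eq_zero_of_eq (Function.update v i (v j))
      (by rw [Function.update_self, Function.update_of_ne hij.symm]) hij, smul_zero]

/-- For singular-value bases `(aᵢ)`, `(b_α)` of `D : V₁ → V₂` with `λ_{iα} = ⟨D aᵢ, b_α⟩`,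
the adapted tangent vectors `eᵢ = (1+λᵢ²)^{-1/2}(aᵢ, D aᵢ)` and normal vectors
`v_α = (1+‖D* b_α‖²)^{-1/2}(−D* b_α, b_α)` satisfy, for the pullback `Ω₁` of the
determinant form of `(aᵢ)` under the first projection,
`Ω₁(v_α, v_β, e₃, …, e_n) = (λ_{1α}λ_{2β} − λ_{2α}λ_{1β}) ∏ₖ (1+λₖ²)^{-1/2}`. -/
theorem omega_on_two_normal_vectors
    {V₁ V₂ : Type*} [NormedAddCommGroup V₁] [InnerProductSpace ℝ V₁]
    [NormedAddCommGroup V₂] [InnerProductSpace ℝ V₂]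
    [FiniteDimensional ℝ V₁] [FiniteDimensional ℝ V₂]
    {n m : ℕ} (hn : Module.finrank ℝ V₁ = n) (hn2 : 2 ≤ n)
    (hm : Module.finrank ℝ V₂ = m)
    (D : V₁ →ₗ[ℝ] V₂)
    (a : OrthonormalBasis (Fin n) ℝ V₁) (b : OrthonormalBasis (Fin m) ℝ V₂)
    (lam : Fin n → ℝ)
    (horth : ∀ (i : Fin n) (α : Fin m), (i : ℕ) ≠ (α : ℕ) → (inner ℝ (D (a i)) (b α) : ℝ) = 0)
    (hlam : ∀ (i : Fin n) (α : Fin m), (i : ℕ) = (α : ℕ) → lam i = (inner ℝ (D (a i)) (b α) : ℝ))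
    (hnonneg : ∀ i, 0 ≤ lam i)
    (hbig : ∀ i : Fin n, m ≤ (i : ℕ) → lam i = 0)
    (α β : Fin m) :
    (a.toBasis.det.compLinearMap (LinearMap.fst ℝ V₁ V₂))
        (fun k : Fin n =>
          if (k : ℕ) = 0 then
            (Real.sqrt (1 + ‖LinearMap.adjoint D (b α)‖ ^ 2))⁻¹ •
              ((-(LinearMap.adjoint D (b α)), b α) : V₁ × V₂)
          else if (k : ℕ) = 1 then
            (Real.sqrt (1 + ‖LinearMap.adjoint D (b β)‖ ^ 2))⁻¹ •
              ((-(LinearMap.adjoint D (b β)), b β) : V₁ × V₂)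
          else
            (Real.sqrt (1 + lam k ^ 2))⁻¹ • ((a k, D (a k)) : V₁ × V₂)) =
      ((inner ℝ (D (a ⟨0, by omega⟩)) (b α) : ℝ) * (inner ℝ (D (a ⟨1, by omega⟩)) (b β) : ℝ) -
          (inner ℝ (D (a ⟨1, by omega⟩)) (b α) : ℝ) * (inner ℝ (D (a ⟨0, by omega⟩)) (b β) : ℝ)) *
        ∏ k : Fin n, (Real.sqrt (1 + lam k ^ 2))⁻¹ := by
  classical
  have h0n : 0 < n := by omega
  have h1n : 1 < n := by omega
  set i0 : Fin n := ⟨0, by omega⟩ with hi0def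
  set i1 : Fin n := ⟨1, by omega⟩ with hi1def
  have hv0 : (i0 : ℕ) = 0 := rfl
  have hv1 : (i1 : ℕ) = 1 := rfl
  have hi01 : i0 ≠ i1 := Fin.ne_of_val_ne (by omega)
  -- adjoint formula
  have hadj : ∀ γ : Fin m, LinearMap.adjoint D (b γ) =
      if h : (γ : ℕ) < n then lam ⟨γ, h⟩ • a ⟨γ, h⟩ else 0 := by
    intro γ
    have hinner : ∀ i : Fin n, (inner ℝ (a i) (LinearMap.adjoint D (b γ)) : ℝ)
        = (inner ℝ (D (a i)) (b γ) : ℝ) := fun i => LinearMap.adjoint_inner_right D (a i) (b γ)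
    rw [← a.sum_repr' (LinearMap.adjoint D (b γ))]
    split_ifs with h
    · rw [Finset.sum_eq_single (⟨(γ : ℕ), h⟩ : Fin n)]
      · rw [hinner, ← hlam ⟨(γ : ℕ), h⟩ γ rfl]
      · intro i _ hne
        rw [hinner, horth i γ (fun hval => hne (Fin.ext hval)), zero_smul]
      · simp
    · refine Finset.sum_eq_zero fun i _ => ?_
      rw [hinner, horth i γ (by have := i.isLt; omega), zero_smul]
  -- norm formula
  have hnorm : ∀ (j : Fin n) (γ : Fin m), (γ : ℕ) = (j : ℕ) →
      (Real.sqrt (1 + ‖LinearMap.adjoint D (b γ)‖ ^ 2))⁻¹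
        = (Real.sqrt (1 + lam j ^ 2))⁻¹ := by
    intro j γ hγ
    have h : (γ : ℕ) < n := hγ ▸ j.isLt
    have hj : (⟨(γ : ℕ), h⟩ : Fin n) = j := Fin.ext hγ
    rw [hadj, dif_pos h, hj, norm_smul, show ‖a j‖ = 1 from a.orthonormal.1 j,
      mul_one, Real.norm_eq_abs, sq_abs]
  set G : Fin n → V₁ := fun k : Fin n =>
      if (k : ℕ) = 0 then
        (Real.sqrt (1 + ‖LinearMap.adjoint D (b α)‖ ^ 2))⁻¹ • (-(LinearMap.adjoint D (b α)))
      else if (k : ℕ) = 1 then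
        (Real.sqrt (1 + ‖LinearMap.adjoint D (b β)‖ ^ 2))⁻¹ • (-(LinearMap.adjoint D (b β)))
      else (Real.sqrt (1 + lam k ^ 2))⁻¹ • a k with hGdef
  rw [AlternatingMap.compLinearMap_apply]
  have hfam : (fun k : Fin n => (LinearMap.fst ℝ V₁ V₂)
      (if (k : ℕ) = 0 then
            (Real.sqrt (1 + ‖LinearMap.adjoint D (b α)‖ ^ 2))⁻¹ •
              ((-(LinearMap.adjoint D (b α)), b α) : V₁ × V₂)
          else if (k : ℕ) = 1 then
            (Real.sqrt (1 + ‖LinearMap.adjoint D (b β)‖ ^ 2))⁻¹ •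
              ((-(LinearMap.adjoint D (b β)), b β) : V₁ × V₂)
          else
            (Real.sqrt (1 + lam k ^ 2))⁻¹ • ((a k, D (a k)) : V₁ × V₂))) = G := by
    funext k
    simp only [hGdef]
    split_ifs <;> rfl
  rw [hfam]
  have hG0 : G i0 = (Real.sqrt (1 + ‖LinearMap.adjoint D (b α)‖ ^ 2))⁻¹ •
      (-(LinearMap.adjoint D (b α))) := by
    simp [hGdef, hv0]
  have hG1 : G i1 = (Real.sqrt (1 + ‖LinearMap.adjoint D (b β)‖ ^ 2))⁻¹ •
      (-(LinearMap.adjoint D (b β))) := by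
    simp [hGdef, hv1]
  have hGk : ∀ k : Fin n, 2 ≤ (k : ℕ) → G k = (Real.sqrt (1 + lam k ^ 2))⁻¹ • a k := by
    intro k hk
    simp only [hGdef]; rw [if_neg (by omega), if_neg (by omega)]
  by_cases hαβ : α = β
  · subst hαβ
    rw [a.toBasis.det.map_eq_zero_of_eq G (by rw [hG0, hG1]) hi01]
    ring
  by_cases hα2 : 2 ≤ (α : ℕ)
  · rw [horth i0 α (by omega), horth i1 α (by omega)]
    simp only [zero_mul, sub_self]
    by_cases hαn : (α : ℕ) < n
    · set j : Fin n := ⟨(α : ℕ), hαn⟩ with hjdef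
      have hvj : (j : ℕ) = (α : ℕ) := rfl
      have hji0 : i0 ≠ j := Fin.ne_of_val_ne (by omega)
      have hs : Real.sqrt (1 + lam j ^ 2) ≠ 0 :=
        ne_of_gt (Real.sqrt_pos.mpr (by positivity))
      refine alt_map_zero_of_smul _ G hji0
        (-((Real.sqrt (1 + ‖LinearMap.adjoint D (b α)‖ ^ 2))⁻¹ * lam j)
          * Real.sqrt (1 + lam j ^ 2)) ?_
      rw [hG0, hGk j (by omega), hadj α, dif_pos hαn, ← hjdef, smul_neg, smul_smul, smul_smul,
        mul_assoc, mul_inv_cancel₀ hs, mul_one, ← neg_smul]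
    · have hz : G i0 = 0 := by rw [hG0, hadj α, dif_neg hαn, neg_zero, smul_zero]
      exact a.toBasis.det.map_coord_zero i0 hz
  by_cases hβ2 : 2 ≤ (β : ℕ)
  · rw [horth i0 β (by omega), horth i1 β (by omega)]
    simp only [mul_zero, sub_self, zero_mul]
    by_cases hβn : (β : ℕ) < n
    · set j : Fin n := ⟨(β : ℕ), hβn⟩ with hjdef
      have hvj : (j : ℕ) = (β : ℕ) := rfl
      have hji1 : i1 ≠ j := Fin.ne_of_val_ne (by omega)
      have hs : Real.sqrt (1 + lam j ^ 2) ≠ 0 :=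
        ne_of_gt (Real.sqrt_pos.mpr (by positivity))
      refine alt_map_zero_of_smul _ G hji1
        (-((Real.sqrt (1 + ‖LinearMap.adjoint D (b β)‖ ^ 2))⁻¹ * lam j)
          * Real.sqrt (1 + lam j ^ 2)) ?_
      rw [hG1, hGk j (by omega), hadj β, dif_pos hβn, ← hjdef, smul_neg, smul_smul, smul_smul,
        mul_assoc, mul_inv_cancel₀ hs, mul_one, ← neg_smul]
    · have hz : G i1 = 0 := by rw [hG1, hadj β, dif_neg hβn, neg_zero, smul_zero]
      exact a.toBasis.det.map_coord_zero i1 hz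
  -- main cases: α, β ∈ {0, 1}, α ≠ β
  set d : Fin n → ℝ := fun k =>
    (if k = i0 then -(lam i0) else 1) * (if k = i1 then -(lam i1) else 1)
      * (Real.sqrt (1 + lam k ^ 2))⁻¹ with hddef
  have hd0 : d i0 = -lam i0 * (Real.sqrt (1 + lam i0 ^ 2))⁻¹ := by
    simp [hddef, hi01]
  have hd1 : d i1 = -lam i1 * (Real.sqrt (1 + lam i1 ^ 2))⁻¹ := by
    simp [hddef, hi01, Ne.symm hi01]
  have hdk : ∀ k : Fin n, k ≠ i0 → k ≠ i1 → d k = (Real.sqrt (1 + lam k ^ 2))⁻¹ := by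
    intro k h h'
    simp only [hddef]; rw [if_neg h, if_neg h']; ring
  have hprod : ∏ k, d k = lam i0 * lam i1 * ∏ k, (Real.sqrt (1 + lam k ^ 2))⁻¹ := by
    simp only [hddef]
    rw [Finset.prod_mul_distrib, Finset.prod_mul_distrib,
      Fintype.prod_ite_eq' i0 (fun _ => -(lam i0)), Fintype.prod_ite_eq' i1 (fun _ => -(lam i1))]
    ring
  have hdet_da : a.toBasis.det (fun k => d k • a k) = ∏ k, d k := by
    have h2 := MultilinearMap.map_smul_univ a.toBasis.det.toMultilinearMap d ⇑a.toBasis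
    simp only [AlternatingMap.coe_multilinearMap] at h2
    have h1 : (fun k => d k • a k) = fun k => d k • a.toBasis k := by
      simp [a.coe_toBasis]
    rw [h1, h2, Module.Basis.det_self, smul_eq_mul, mul_one]
  have hαβval : (α : ℕ) ≠ (β : ℕ) := fun h => hαβ (Fin.ext h)
  by_cases hα0 : (α : ℕ) = 0
  · -- α = 0, β = 1
    have hβ1 : (β : ℕ) = 1 := by omega
    have hGd : G = fun k => d k • a k := by
      funext k
      show G k = d k • a k
      by_cases hk0 : (k : ℕ) = 0
      · have hk : k = i0 := Fin.ext hk0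
        rw [hk, hG0, hd0, hnorm i0 α hα0, hadj α, dif_pos (show (α : ℕ) < n by omega),
          show (⟨(α : ℕ), by omega⟩ : Fin n) = i0 from Fin.ext hα0]
        module
      by_cases hk1 : (k : ℕ) = 1
      · have hk : k = i1 := Fin.ext hk1
        rw [hk, hG1, hd1, hnorm i1 β hβ1, hadj β, dif_pos (show (β : ℕ) < n by omega),
          show (⟨(β : ℕ), by omega⟩ : Fin n) = i1 from Fin.ext hβ1]
        module
      · have hki0 : k ≠ i0 := fun h => hk0 (by rw [h])
        have hki1 : k ≠ i1 := fun h => hk1 (by rw [h])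
        rw [hGk k (by omega), hdk k hki0 hki1]
    rw [hGd, hdet_da, hprod, ← hlam i0 α hα0.symm, ← hlam i1 β hβ1.symm,
      horth i1 α (by omega), horth i0 β (by omega)]
    ring
  · -- α = 1, β = 0
    have hα1 : (α : ℕ) = 1 := by omega
    have hβ0 : (β : ℕ) = 0 := by omega
    have hGd : G ∘ Equiv.swap i0 i1 = fun k => d k • a k := by
      funext k
      show G (Equiv.swap i0 i1 k) = d k • a k
      by_cases hk0 : (k : ℕ) = 0
      · have hk : k = i0 := Fin.ext hk0
        rw [hk, Equiv.swap_apply_left, hG1, hd0, hnorm i0 β hβ0, hadj β,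
          dif_pos (show (β : ℕ) < n by omega),
          show (⟨(β : ℕ), by omega⟩ : Fin n) = i0 from Fin.ext hβ0]
        module
      by_cases hk1 : (k : ℕ) = 1
      · have hk : k = i1 := Fin.ext hk1
        rw [hk, Equiv.swap_apply_right, hG0, hd1, hnorm i1 α hα1, hadj α,
          dif_pos (show (α : ℕ) < n by omega),
          show (⟨(α : ℕ), by omega⟩ : Fin n) = i1 from Fin.ext hα1]
        module
      · have hki0 : k ≠ i0 := fun h => hk0 (by rw [h])
        have hki1 : k ≠ i1 := fun h => hk1 (by rw [h])
        rw [Equiv.swap_apply_of_ne_of_ne hki0 hki1, hGk k (by omega), hdk k hki0 hki1]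
    have hsw := a.toBasis.det.map_swap G hi01
    rw [hGd, hdet_da, hprod] at hsw
    have hdetG : a.toBasis.det G
        = -(lam i0 * lam i1 * ∏ k, (Real.sqrt (1 + lam k ^ 2))⁻¹) := by linarith
    rw [hdetG, ← hlam i1 α hα1.symm, ← hlam i0 β hβ0.symm,
      horth i0 α (by omega), horth i1 β (by omega)]
    ring
end
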